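/- Let d ≥ 1, Δ = 2^d, n, k ≥ 1, and let a, b : {1,…,n} → {1,…,Δ}² be sequences of points such that the multiset T has at most k distinct points. For each i ∈ {0,…,d} and j ∈ {1,…,2d}, let v_i^j be chosen independently and uniformly at random from {0,…,2^i−1}², and set Y = (1/2)·Σ_{i=0}^{d} 2^i·min_{1≤j≤2d} D_{2^i,v_i^j}(a,b). Then the probability that Y ≤ 16k·EMD(a,b) is at least 1 − (d+1)/2^{2d}. -/

import Mathlib

/-- ℓ1 norm on ℤ². -/
def l1 (p : ℤ × ℤ) : ℤ := |p.1| + |p.2|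

/-- Earth-mover distance between the multisets {a 1,…,a n} and {b 1,…,b n}:
the minimum over permutations σ of ∑ i, ‖a i − b (σ i)‖₁. -/
noncomputable def EMD {n : ℕ} (a b : Fin n → ℤ × ℤ) : ℤ :=
  Finset.univ.inf' Finset.univ_nonempty
    (fun σ : Equiv.Perm (Fin n) => ∑ i, l1 (a i - b (σ i)))

/-- The grid cell of a point p for the grid of cell size L shifted by v
(floor division; `/` on ℤ with positive divisor is floor division). -/
def cell (L : ℕ) (v p : ℤ × ℤ) : ℤ × ℤ :=
  ((p.1 - v.1) / (L : ℤ), (p.2 - v.2) / (L : ℤ))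

/-- The grid ℓ1-difference D_{L,v}(a,b) = Σ_{c∈ℤ²} |#{i : cell(a i) = c} − #{i : cell(b i) = c}|,
where the (finite) sum is taken over the cells actually occupied (all other terms vanish). -/
def D {n : ℕ} (L : ℕ) (v : ℤ × ℤ) (a b : Fin n → ℤ × ℤ) : ℤ :=
  ∑ c ∈ ((Finset.univ.image fun i => cell L v (a i)) ∪
         (Finset.univ.image fun i => cell L v (b i))),
    |((Finset.univ.filter fun i => cell L v (a i) = c).card : ℤ) -
      ((Finset.univ.filter fun i => cell L v (b i) = c).card : ℤ)|

/-- The sample space for choosing, independently and uniformly, a shift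
w (i, j) ∈ {0,…,2^i−1}² for every level i ∈ {0,…,d} and every j ∈ {1,…,2d}
(here the uniform distribution on this product set is the product of the
per-coordinate uniform distributions). -/
noncomputable def shiftSpace (d : ℕ) : Finset ((Fin (d + 1) × Fin (2 * d)) → ℤ × ℤ) :=
  Fintype.piFinset fun p =>
    Finset.Ico (0 : ℤ) (2 ^ (p.1 : ℕ) : ℤ) ×ˢ Finset.Ico (0 : ℤ) (2 ^ (p.1 : ℕ) : ℤ)

section Aux

lemma l1_nonneg (p : ℤ × ℤ) : 0 ≤ l1 p := add_nonneg (abs_nonneg _) (abs_nonneg _)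

lemma exists_boundary_lt {L p q v : ℤ} (hL : 0 < L) (hpq : p < q)
    (h : (p - v) / L ≠ (q - v) / L) :
    ∃ z, z % L = v % L ∧ p < z ∧ z ≤ q := by
  have hle : (p - v) / L ≤ (q - v) / L := Int.ediv_le_ediv hL (by omega)
  have hlt : (p - v) / L < (q - v) / L := lt_of_le_of_ne hle h
  refine ⟨v + ((q - v) / L) * L, by simp [Int.add_mul_emod_self_left], ?_, ?_⟩
  · have h2 : ¬ ((q - v) / L * L ≤ p - v) := by
      intro hc
      have := (Int.le_ediv_iff_mul_le hL).mpr hc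
      omega
    omega
  · have h3 : (q - v) / L * L ≤ q - v := (Int.le_ediv_iff_mul_le hL).mp le_rfl
    omega

lemma exists_boundary {L p q v : ℤ} (hL : 0 < L)
    (h : (p - v) / L ≠ (q - v) / L) :
    ∃ z, z % L = v % L ∧ min p q < z ∧ z ≤ max p q := by
  rcases lt_trichotomy p q with hpq | hpq | hpq
  · obtain ⟨z, h1, h2, h3⟩ := exists_boundary_lt hL hpq h
    exact ⟨z, h1, by omega, by omega⟩
  · exact absurd (by rw [hpq]) h
  · obtain ⟨z, h1, h2, h3⟩ := exists_boundary_lt hL hpq (Ne.symm h)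
    exact ⟨z, h1, by omega, by omega⟩

/-- bad shifts in one coordinate near center `c` with radius `R`. -/
noncomputable def badX (L R c : ℤ) : Finset ℤ := (Finset.Ioc (c - R) (c + R)).image (· % L)

lemma badX_card (L R c : ℤ) : (badX L R c).card ≤ (2 * R).toNat := by
  calc (badX L R c).card ≤ (Finset.Ioc (c - R) (c + R)).card := Finset.card_image_le
  _ = (2 * R).toNat := by rw [Int.card_Ioc]; congr 1; ring

lemma mem_badX {L R c v x y : ℤ} (hL : 0 < L) (hv : 0 ≤ v) (hv' : v < L)
    (hne : (x - v) / L ≠ (y - v) / L) (hx : |x - c| ≤ R) (hy : |y - c| ≤ R) :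
    v ∈ badX L R c := by
  obtain ⟨z, hz, hz1, hz2⟩ := exists_boundary hL hne
  have hx' := abs_le.mp hx
  have hy' := abs_le.mp hy
  have hmin : c - R ≤ min x y := le_min (by omega) (by omega)
  have hmax : max x y ≤ c + R := max_le (by omega) (by omega)
  refine Finset.mem_image.mpr ⟨z, Finset.mem_Ioc.mpr ⟨by omega, by omega⟩, ?_⟩
  rw [hz, Int.emod_eq_of_lt hv hv']

lemma card_filter_comp_perm {n : ℕ} (P : Fin n → Prop) [DecidablePred P] (σ : Equiv.Perm (Fin n)) :
    (Finset.univ.filter fun i => P (σ i)).card = (Finset.univ.filter P).card := by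
  apply Finset.card_bij (fun t _ => σ t)
  · intro t ht; simp only [Finset.mem_filter, Finset.mem_univ, true_and] at ht ⊢; exact ht
  · intro t₁ _ t₂ _ h; exact σ.injective h
  · intro t ht
    simp only [Finset.mem_filter, Finset.mem_univ, true_and] at ht
    exact ⟨σ.symm t, by simp [ht], by simp⟩

lemma D_le_two_mul {n : ℕ} (L : ℕ) (v : ℤ × ℤ) (a b : Fin n → ℤ × ℤ) (σ : Equiv.Perm (Fin n)) :
    D L v a b ≤
      2 * ((Finset.univ.filter fun t => cell L v (a t) ≠ cell L v (b (σ t))).card : ℤ) := by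
  classical
  set Dset := Finset.univ.filter fun t => cell L v (a t) ≠ cell L v (b (σ t)) with hDset
  have key : ∀ c : ℤ × ℤ,
      |((Finset.univ.filter fun i => cell L v (a i) = c).card : ℤ) -
        ((Finset.univ.filter fun i => cell L v (b i) = c).card : ℤ)| ≤
      ∑ t ∈ Dset, ((if cell L v (a t) = c then (1 : ℤ) else 0) +
        (if cell L v (b (σ t)) = c then (1 : ℤ) else 0)) := by
    intro c
    have hbσ : ((Finset.univ.filter fun i => cell L v (b i) = c).card : ℤ)
        = ((Finset.univ.filter fun i => cell L v (b (σ i)) = c).card : ℤ) := by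
      rw [card_filter_comp_perm (fun i => cell L v (b i) = c) σ]
    rw [hbσ, Finset.card_filter, Finset.card_filter]
    push_cast
    rw [← Finset.sum_sub_distrib]
    have hzero : ∀ t ∈ Finset.univ \ Dset,
        ((if cell L v (a t) = c then (1 : ℤ) else 0) -
          (if cell L v (b (σ t)) = c then (1 : ℤ) else 0)) = 0 := by
      intro t ht
      simp only [hDset, Finset.mem_sdiff, Finset.mem_filter, Finset.mem_univ, true_and,
        not_not] at ht
      rw [ht]; simp
    rw [← Finset.sum_subset (Finset.filter_subset _ _)
      (by intro t _ ht2; exact hzero t (Finset.mem_sdiff.mpr ⟨Finset.mem_univ t, ht2⟩))]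
    refine le_trans (Finset.abs_sum_le_sum_abs _ _) (Finset.sum_le_sum ?_)
    intro t _
    split <;> split <;> simp
  calc D L v a b ≤ ∑ c ∈ ((Finset.univ.image fun i => cell L v (a i)) ∪
         (Finset.univ.image fun i => cell L v (b i))),
      ∑ t ∈ Dset, ((if cell L v (a t) = c then (1 : ℤ) else 0) +
        (if cell L v (b (σ t)) = c then (1 : ℤ) else 0)) :=
        Finset.sum_le_sum fun c _ => key c
  _ = ∑ t ∈ Dset, ∑ c ∈ ((Finset.univ.image fun i => cell L v (a i)) ∪
         (Finset.univ.image fun i => cell L v (b i))),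
      ((if cell L v (a t) = c then (1 : ℤ) else 0) +
        (if cell L v (b (σ t)) = c then (1 : ℤ) else 0)) := Finset.sum_comm
  _ ≤ ∑ t ∈ Dset, 2 := by
      refine Finset.sum_le_sum fun t _ => ?_
      rw [Finset.sum_add_distrib, Finset.sum_ite_eq, Finset.sum_ite_eq]
      split <;> split <;> norm_num
  _ = 2 * (Dset.card : ℤ) := by rw [Finset.sum_const]; push_cast; ring

lemma geom_two_sum : ∀ m : ℕ, (∑ i ∈ Finset.range m, (2 ^ i : ℤ)) = 2 ^ m - 1 := by
  intro m
  induction m with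
  | zero => simp
  | succ mm ihm => rw [Finset.sum_range_succ, ihm]; ring

lemma sum_ite_pow_le_aux (M : ℤ) : ∀ Dn : ℕ,
    (∑ i ∈ Finset.range Dn, if (2 ^ i : ℤ) < M then (2 ^ i : ℤ) else 0) ≤ max (2 * M - 2) 0 := by
  intro Dn
  induction Dn with
  | zero => simp
  | succ m ih =>
    rw [Finset.sum_range_succ]
    by_cases h : (2 ^ m : ℤ) < M
    · have hsum : (∑ i ∈ Finset.range m, if (2 ^ i : ℤ) < M then (2 ^ i : ℤ) else 0)
          ≤ 2 ^ m - 1 := by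
        calc _ ≤ ∑ i ∈ Finset.range m, (2 ^ i : ℤ) := by
              refine Finset.sum_le_sum fun i _ => ?_
              split
              · exact le_refl _
              · positivity
        _ = 2 ^ m - 1 := geom_two_sum m
      rw [if_pos h]
      have : (0:ℤ) < 2 ^ m := by positivity
      omega
    · rw [if_neg h]; simpa using ih

lemma sum_ite_pow_le {k : ℕ} (hk : 1 ≤ k) {T : ℤ} (hT : 0 ≤ T) (Dn : ℕ) :
    (∑ i ∈ Finset.range Dn, if (2 ^ i : ℤ) < 8 * k * T then (2 ^ i : ℤ) else 0)
      ≤ 16 * k * T := by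
  refine le_trans (sum_ite_pow_le_aux _ Dn) ?_
  rcases eq_or_lt_of_le hT with h0 | h1
  · rw [← h0]; simp
  · have h1' : (1:ℤ) ≤ T := h1
    have hk' : (1:ℤ) ≤ (k:ℤ) := by exact_mod_cast hk
    have : (8:ℤ) * k * T ≥ 8 := by nlinarith
    rw [max_eq_left (by omega)]
    nlinarith

open scoped Classical in
lemma filter_pi_eq {d m : ℕ} (F : Fin (d+1) → Finset (ℤ × ℤ)) (i : Fin (d+1))
    (B : Finset (ℤ × ℤ)) (hB : B ⊆ F i) :
    ((Fintype.piFinset fun p : Fin (d+1) × Fin m => F p.1).filter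
        fun w => ∀ j, w (i, j) ∈ B) =
      Fintype.piFinset (fun p : Fin (d+1) × Fin m => if p.1 = i then B else F p.1) := by
  ext w
  simp only [Finset.mem_filter, Fintype.mem_piFinset]
  constructor
  · rintro ⟨h1, h2⟩ p
    by_cases hp : p.1 = i
    · rw [if_pos hp]
      have : p = (i, p.2) := by rw [← hp]
      rw [this]
      exact h2 p.2
    · rw [if_neg hp]; exact h1 p
  · intro h
    constructor
    · intro p
      by_cases hp : p.1 = i
      · have := h p
        rw [if_pos hp] at this
        have h2 := hB this
        rwa [hp]
      · have := h p; rwa [if_neg hp] at this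
    · intro j
      have := h (i, j)
      rwa [if_pos rfl] at this

open scoped Classical in
lemma badEvent_card_le {d m : ℕ} (F : Fin (d+1) → Finset (ℤ × ℤ)) (i : Fin (d+1))
    (B : Finset (ℤ × ℤ)) (hB : B ⊆ F i) (hcard : 2 * B.card ≤ (F i).card) :
    2 ^ m * ((Fintype.piFinset fun p : Fin (d+1) × Fin m => F p.1).filter
        fun w => ∀ j, w (i, j) ∈ B).card ≤
      (Fintype.piFinset fun p : Fin (d+1) × Fin m => F p.1).card := by
  rw [filter_pi_eq F i B hB, Fintype.card_piFinset, Fintype.card_piFinset,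
    Fintype.prod_prod_type, Fintype.prod_prod_type]
  simp only [Finset.prod_const, Finset.card_univ, Fintype.card_fin]
  rw [← Finset.mul_prod_erase Finset.univ _ (Finset.mem_univ i),
    ← Finset.mul_prod_erase Finset.univ (fun x => (F x).card ^ m) (Finset.mem_univ i)]
  rw [if_pos rfl, ← mul_assoc]
  have hrest : ∀ x ∈ Finset.univ.erase i,
      ((if x = i then B else F x).card) ^ m = (F x).card ^ m := by
    intro x hx
    rw [if_neg (Finset.mem_erase.mp hx).1]
  rw [Finset.prod_congr rfl hrest]
  apply Nat.mul_le_mul_right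
  calc 2 ^ m * B.card ^ m = (2 * B.card) ^ m := by rw [mul_pow]
  _ ≤ (F i).card ^ m := Nat.pow_le_pow_left hcard m

end Aux

open scoped Classical in
/-- Lemma, upper bound: with points in {1,…,2^d}², T with at most k
distinct points, and 2d independent uniform shifts per level, setting
Y = (1/2)·Σ_{i=0}^{d} 2^i·min_{1≤j≤2d} D_{2^i,v_i^j}(a,b), the probability that
Y ≤ 16k·EMD(a,b) is at least 1 − (d+1)/2^{2d}. -/
theorem upper_bound_probability (d n k : ℕ) (hd : 1 ≤ d) (hn : 1 ≤ n) (hk : 1 ≤ k)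
    (a b : Fin n → ℤ × ℤ)
    (ha : ∀ i, 1 ≤ (a i).1 ∧ (a i).1 ≤ 2 ^ d ∧ 1 ≤ (a i).2 ∧ (a i).2 ≤ 2 ^ d)
    (hb : ∀ i, 1 ≤ (b i).1 ∧ (b i).1 ≤ 2 ^ d ∧ 1 ≤ (b i).2 ∧ (b i).2 ≤ 2 ^ d)
    (hT : (Finset.univ.image b).card ≤ k) :
    1 - ((d : ℝ) + 1) / 2 ^ (2 * d) ≤
      (((shiftSpace d).filter fun w =>
          (1 / 2 : ℝ) * ∑ i : Fin (d + 1), (2 : ℝ) ^ (i : ℕ) *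
            ((Finset.univ.inf' ⟨⟨0, by omega⟩, Finset.mem_univ _⟩
              fun j : Fin (2 * d) => D (2 ^ (i : ℕ)) (w (i, j)) a b : ℤ) : ℝ) ≤
            16 * (k : ℝ) * (EMD a b : ℝ)).card : ℝ) /
        ((shiftSpace d).card : ℝ) := by
  classical
  -- the optimal matching
  obtain ⟨σ, -, hσ⟩ := Finset.exists_mem_eq_inf' (Finset.univ_nonempty)
    (fun σ : Equiv.Perm (Fin n) => ∑ i, l1 (a i - b (σ i)))
  have hEMD : EMD a b = ∑ t, l1 (a t - b (σ t)) := hσ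
  -- basic data
  set F' : Fin (d+1) → Finset (ℤ × ℤ) := fun i =>
    Finset.Ico (0 : ℤ) (2 ^ (i : ℕ) : ℤ) ×ˢ Finset.Ico (0 : ℤ) (2 ^ (i : ℕ) : ℤ) with hF'
  have hSS : shiftSpace d = Fintype.piFinset (fun p : Fin (d+1) × Fin (2*d) => F' p.1) := rfl
  set R : Fin (d+1) → ℕ := fun i => 2 ^ (i : ℕ) / (8 * k) with hR
  set Q : Finset (ℤ × ℤ) := Finset.univ.image b with hQ
  set Bad : Fin (d+1) → Finset (ℤ × ℤ) := fun i => (F' i).filter (fun v =>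
    ∃ q ∈ Q, v.1 ∈ badX (2 ^ (i : ℕ) : ℤ) (R i : ℤ) q.1 ∨
             v.2 ∈ badX (2 ^ (i : ℕ) : ℤ) (R i : ℤ) q.2) with hBad
  have hLpos : ∀ i : Fin (d+1), (0:ℤ) < (2 ^ (i : ℕ) : ℤ) := fun i => by positivity
  have hcastL : ∀ i : Fin (d+1), ((2 ^ (i : ℕ) : ℕ) : ℤ) = (2 ^ (i : ℕ) : ℤ) := fun i => by
    push_cast; ring
  -- cardinality of components
  have hIcoCard : ∀ i : Fin (d+1), (Finset.Ico (0 : ℤ) (2 ^ (i : ℕ) : ℤ)).card = 2 ^ (i:ℕ) := by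
    intro i
    rw [Int.card_Ico, sub_zero, ← hcastL i, Int.toNat_natCast]
  have hF'card : ∀ i : Fin (d+1), (F' i).card = 2 ^ (i:ℕ) * 2 ^ (i:ℕ) := by
    intro i
    rw [hF', Finset.card_product, hIcoCard i]
  -- card of Bad
  have hBadCard : ∀ i : Fin (d+1), 2 * (Bad i).card ≤ (F' i).card := by
    intro i
    have hsub : Bad i ⊆ Q.biUnion (fun q =>
        badX (2 ^ (i : ℕ) : ℤ) (R i : ℤ) q.1 ×ˢ Finset.Ico (0 : ℤ) (2 ^ (i : ℕ) : ℤ) ∪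
        Finset.Ico (0 : ℤ) (2 ^ (i : ℕ) : ℤ) ×ˢ badX (2 ^ (i : ℕ) : ℤ) (R i : ℤ) q.2) := by
      intro v hv
      rw [hBad, Finset.mem_filter] at hv
      obtain ⟨hvF, q, hqQ, hcase⟩ := hv
      rw [hF', Finset.mem_product] at hvF
      refine Finset.mem_biUnion.mpr ⟨q, hqQ, ?_⟩
      rcases hcase with h1 | h2
      · exact Finset.mem_union_left _ (Finset.mem_product.mpr ⟨h1, hvF.2⟩)
      · exact Finset.mem_union_right _ (Finset.mem_product.mpr ⟨hvF.1, h2⟩)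
    have hbadXcard : ∀ c : ℤ, (badX (2 ^ (i : ℕ) : ℤ) (R i : ℤ) c).card ≤ 2 * R i := by
      intro c
      refine le_trans (badX_card _ _ _) ?_
      rw [show (2 * (R i : ℤ)) = ((2 * R i : ℕ) : ℤ) by push_cast; ring, Int.toNat_natCast]
    have hcard1 : (Bad i).card ≤ k * (2 * R i * 2 ^ (i:ℕ) + 2 ^ (i:ℕ) * (2 * R i)) := by
      calc (Bad i).card ≤ ∑ q ∈ Q,
            (badX (2 ^ (i : ℕ) : ℤ) (R i : ℤ) q.1 ×ˢ Finset.Ico (0 : ℤ) (2 ^ (i : ℕ) : ℤ) ∪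
              Finset.Ico (0 : ℤ) (2 ^ (i : ℕ) : ℤ) ×ˢ badX (2 ^ (i : ℕ) : ℤ) (R i : ℤ) q.2).card :=
            le_trans (Finset.card_le_card hsub) Finset.card_biUnion_le
      _ ≤ ∑ _q ∈ Q, (2 * R i * 2 ^ (i:ℕ) + 2 ^ (i:ℕ) * (2 * R i)) := by
            refine Finset.sum_le_sum fun q _ => ?_
            refine le_trans (Finset.card_union_le _ _) ?_
            rw [Finset.card_product, Finset.card_product, hIcoCard i]
            exact Nat.add_le_add (Nat.mul_le_mul_right _ (hbadXcard q.1))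
              (Nat.mul_le_mul_left _ (hbadXcard q.2))
      _ = Q.card * (2 * R i * 2 ^ (i:ℕ) + 2 ^ (i:ℕ) * (2 * R i)) := by
            rw [Finset.sum_const, smul_eq_mul]
      _ ≤ k * (2 * R i * 2 ^ (i:ℕ) + 2 ^ (i:ℕ) * (2 * R i)) := Nat.mul_le_mul_right _ hT
    have hRk : 8 * k * R i ≤ 2 ^ (i:ℕ) := by
      rw [hR]
      calc 8 * k * (2 ^ (i:ℕ) / (8 * k)) = 2 ^ (i:ℕ) / (8*k) * (8*k) := by ring
      _ ≤ 2 ^ (i:ℕ) := Nat.div_mul_le_self _ _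
    rw [hF'card i]
    calc 2 * (Bad i).card ≤ 2 * (k * (2 * R i * 2 ^ (i:ℕ) + 2 ^ (i:ℕ) * (2 * R i))) :=
          Nat.mul_le_mul_left _ hcard1
    _ = (8 * k * R i) * 2 ^ (i:ℕ) := by ring
    _ ≤ 2 ^ (i:ℕ) * 2 ^ (i:ℕ) := Nat.mul_le_mul_right _ hRk
  -- good shifts give the crossing bound
  have hgoodD : ∀ (i : Fin (d+1)) (v : ℤ × ℤ), v ∈ F' i → v ∉ Bad i →
      D (2 ^ (i:ℕ)) v a b ≤ 2 * ((Finset.univ.filter fun t =>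
        (2 ^ (i:ℕ) : ℤ) < 8 * k * l1 (a t - b (σ t))).card : ℤ) := by
    intro i v hv hnb
    refine le_trans (D_le_two_mul _ v a b σ) ?_
    have hmono : (Finset.univ.filter fun t =>
        cell (2 ^ (i:ℕ)) v (a t) ≠ cell (2 ^ (i:ℕ)) v (b (σ t))) ⊆
        (Finset.univ.filter fun t => (2 ^ (i:ℕ) : ℤ) < 8 * k * l1 (a t - b (σ t))) := by
      intro t ht
      simp only [Finset.mem_filter, Finset.mem_univ, true_and] at ht ⊢
      by_contra hnot
      push_neg at hnot
      -- hnot : 8 * k * l1 (a t - b (σ t)) ≤ 2 ^ i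
      set T : ℤ := l1 (a t - b (σ t)) with hTdef
      have hT0 : 0 ≤ T := l1_nonneg _
      have hTR : T ≤ (R i : ℤ) := by
        have h1 : T.toNat * (8 * k) ≤ 2 ^ (i:ℕ) := by
          have : ((T.toNat * (8*k) : ℕ) : ℤ) ≤ ((2 ^ (i:ℕ) : ℕ) : ℤ) := by
            rw [hcastL i]; push_cast
            rw [Int.toNat_of_nonneg hT0]
            linarith [hnot]
          exact_mod_cast this
        have h2 : T.toNat ≤ R i := by
          rw [hR]
          exact (Nat.le_div_iff_mul_le (by positivity)).mpr h1
        calc T = (T.toNat : ℤ) := (Int.toNat_of_nonneg hT0).symm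
        _ ≤ (R i : ℤ) := by exact_mod_cast h2
      -- the pair crosses a boundary near q := b (σ t)
      have hvmem : v.1 ∈ Finset.Ico (0:ℤ) (2 ^ (i:ℕ) : ℤ) ∧
          v.2 ∈ Finset.Ico (0:ℤ) (2 ^ (i:ℕ) : ℤ) := by
        rw [hF'] at hv; exact Finset.mem_product.mp hv
      obtain ⟨hv1, hv2⟩ := hvmem
      rw [Finset.mem_Ico] at hv1 hv2
      have hx1 : |(a t).1 - (b (σ t)).1| ≤ T := by
        rw [hTdef]
        have : (a t - b (σ t)).1 = (a t).1 - (b (σ t)).1 := rfl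
        rw [l1, this]
        have := abs_nonneg ((a t - b (σ t)).2)
        omega
      have hx2 : |(a t).2 - (b (σ t)).2| ≤ T := by
        rw [hTdef]
        have : (a t - b (σ t)).2 = (a t).2 - (b (σ t)).2 := rfl
        rw [l1, this]
        have := abs_nonneg ((a t - b (σ t)).1)
        omega
      have hcell : cell (2 ^ (i:ℕ)) v (a t) ≠ cell (2 ^ (i:ℕ)) v (b (σ t)) := ht
      rw [cell, cell, hcastL i, Ne, Prod.mk.injEq, not_and_or] at hcell
      have hvBad : v ∈ Bad i := by
        rw [hBad, Finset.mem_filter]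
        refine ⟨hv, b (σ t), Finset.mem_image.mpr ⟨σ t, Finset.mem_univ _, rfl⟩, ?_⟩
        rcases hcell with hc1 | hc2
        · left
          exact mem_badX (hLpos i) hv1.1 hv1.2 hc1
            (le_trans hx1 hTR) (by simpa using Int.natCast_nonneg (R i))
        · right
          exact mem_badX (hLpos i) hv2.1 hv2.2 hc2
            (le_trans hx2 hTR) (by simpa using Int.natCast_nonneg (R i))
      exact hnb hvBad
    have := Finset.card_le_card hmono
    omega
  -- the good event implies the estimate
  have hkey : ∀ w ∈ shiftSpace d, (∀ i : Fin (d+1), ∃ j : Fin (2*d), w (i, j) ∉ Bad i) →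
      (1 / 2 : ℝ) * ∑ i : Fin (d + 1), (2 : ℝ) ^ (i : ℕ) *
        ((Finset.univ.inf' ⟨⟨0, by omega⟩, Finset.mem_univ _⟩
          fun j : Fin (2 * d) => D (2 ^ (i : ℕ)) (w (i, j)) a b : ℤ) : ℝ) ≤
        16 * (k : ℝ) * (EMD a b : ℝ) := by
    intro w hw hgood
    set N : Fin (d+1) → ℕ := fun i => (Finset.univ.filter fun t =>
      (2 ^ (i:ℕ) : ℤ) < 8 * k * l1 (a t - b (σ t))).card with hN
    have hinf : ∀ i : Fin (d+1),
        (Finset.univ.inf' ⟨⟨0, by omega⟩, Finset.mem_univ _⟩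
          fun j : Fin (2 * d) => D (2 ^ (i : ℕ)) (w (i, j)) a b : ℤ) ≤ 2 * (N i : ℤ) := by
      intro i
      obtain ⟨j, hj⟩ := hgood i
      refine le_trans (Finset.inf'_le _ (Finset.mem_univ j)) ?_
      have hwm : w (i, j) ∈ F' i := by
        rw [hSS, Fintype.mem_piFinset] at hw
        exact hw (i, j)
      exact hgoodD i (w (i,j)) hwm hj
    have hZ : (∑ i : Fin (d+1), (2 ^ (i:ℕ) : ℤ) *
        (Finset.univ.inf' ⟨⟨0, by omega⟩, Finset.mem_univ _⟩
          fun j : Fin (2 * d) => D (2 ^ (i : ℕ)) (w (i, j)) a b : ℤ)) ≤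
        32 * k * EMD a b := by
      calc (∑ i : Fin (d+1), (2 ^ (i:ℕ) : ℤ) *
          (Finset.univ.inf' ⟨⟨0, by omega⟩, Finset.mem_univ _⟩
            fun j : Fin (2 * d) => D (2 ^ (i : ℕ)) (w (i, j)) a b : ℤ)) ≤
          ∑ i : Fin (d+1), (2 ^ (i:ℕ) : ℤ) * (2 * (N i : ℤ)) := by
            refine Finset.sum_le_sum fun i _ => ?_
            exact mul_le_mul_of_nonneg_left (hinf i) (by positivity)
      _ = 2 * ∑ i : Fin (d+1), ∑ t : Fin n,
            (if (2 ^ (i:ℕ) : ℤ) < 8 * k * l1 (a t - b (σ t)) then (2 ^ (i:ℕ) : ℤ) else 0) := by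
            rw [Finset.mul_sum]
            refine Finset.sum_congr rfl fun i _ => ?_
            simp only [hN, Finset.card_filter]
            push_cast
            simp only [Finset.mul_sum]
            refine Finset.sum_congr rfl fun t _ => ?_
            split <;> simp [mul_comm]
      _ = 2 * ∑ t : Fin n, ∑ i : Fin (d+1),
            (if (2 ^ (i:ℕ) : ℤ) < 8 * k * l1 (a t - b (σ t)) then (2 ^ (i:ℕ) : ℤ) else 0) := by
            rw [Finset.sum_comm]
      _ ≤ 2 * ∑ t : Fin n, 16 * k * l1 (a t - b (σ t)) := by
            refine mul_le_mul_of_nonneg_left (Finset.sum_le_sum fun t _ => ?_) (by norm_num)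
            rw [Fin.sum_univ_eq_sum_range
              (fun i => if (2 ^ i : ℤ) < 8 * k * l1 (a t - b (σ t)) then (2 ^ i : ℤ) else 0)]
            exact sum_ite_pow_le hk (l1_nonneg _) (d+1)
      _ = 32 * k * EMD a b := by
            rw [hEMD, Finset.mul_sum]
            rw [Finset.mul_sum]
            refine Finset.sum_congr rfl fun t _ => ?_
            ring
    have hcast : (∑ i : Fin (d + 1), (2 : ℝ) ^ (i : ℕ) *
        ((Finset.univ.inf' ⟨⟨0, by omega⟩, Finset.mem_univ _⟩
          fun j : Fin (2 * d) => D (2 ^ (i : ℕ)) (w (i, j)) a b : ℤ) : ℝ)) =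
        ((∑ i : Fin (d+1), (2 ^ (i:ℕ) : ℤ) *
          (Finset.univ.inf' ⟨⟨0, by omega⟩, Finset.mem_univ _⟩
            fun j : Fin (2 * d) => D (2 ^ (i : ℕ)) (w (i, j)) a b : ℤ) : ℤ) : ℝ) := by
      push_cast
      rfl
    rw [hcast]
    have : ((∑ i : Fin (d+1), (2 ^ (i:ℕ) : ℤ) *
          (Finset.univ.inf' ⟨⟨0, by omega⟩, Finset.mem_univ _⟩
            fun j : Fin (2 * d) => D (2 ^ (i : ℕ)) (w (i, j)) a b : ℤ) : ℤ) : ℝ) ≤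
        ((32 * k * EMD a b : ℤ) : ℝ) := by exact_mod_cast hZ
    push_cast at this ⊢
    linarith
  -- counting
  have hPcard_pos : 0 < (shiftSpace d).card := by
    rw [hSS, Fintype.card_piFinset]
    refine Finset.prod_pos fun p _ => ?_
    rw [hF'card p.1]
    positivity
  set BadW := (shiftSpace d).filter
    (fun w => ¬ ∀ i : Fin (d+1), ∃ j : Fin (2*d), w (i, j) ∉ Bad i) with hBadW
  have hBadWcard : 2 ^ (2*d) * BadW.card ≤ (d+1) * (shiftSpace d).card := by
    have hsub : BadW ⊆ (Finset.univ : Finset (Fin (d+1))).biUnion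
        (fun i => (shiftSpace d).filter (fun w => ∀ j : Fin (2*d), w (i, j) ∈ Bad i)) := by
      intro w hw
      rw [hBadW, Finset.mem_filter] at hw
      obtain ⟨hwP, hbad⟩ := hw
      push_neg at hbad
      obtain ⟨i, hi⟩ := hbad
      exact Finset.mem_biUnion.mpr ⟨i, Finset.mem_univ _,
        Finset.mem_filter.mpr ⟨hwP, fun j => hi j⟩⟩
    have heach : ∀ i : Fin (d+1),
        2 ^ (2*d) * ((shiftSpace d).filter
          (fun w => ∀ j : Fin (2*d), w (i, j) ∈ Bad i)).card ≤ (shiftSpace d).card := by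
      intro i
      rw [hSS]
      exact badEvent_card_le F' i (Bad i) (Finset.filter_subset _ _) (hBadCard i)
    calc 2 ^ (2*d) * BadW.card ≤ 2 ^ (2*d) * ∑ i : Fin (d+1),
          ((shiftSpace d).filter (fun w => ∀ j : Fin (2*d), w (i, j) ∈ Bad i)).card :=
          Nat.mul_le_mul_left _ (le_trans (Finset.card_le_card hsub) Finset.card_biUnion_le)
    _ = ∑ i : Fin (d+1), 2 ^ (2*d) *
          ((shiftSpace d).filter (fun w => ∀ j : Fin (2*d), w (i, j) ∈ Bad i)).card :=
          Finset.mul_sum _ _ _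
    _ ≤ ∑ _i : Fin (d+1), (shiftSpace d).card := Finset.sum_le_sum fun i _ => heach i
    _ = (d+1) * (shiftSpace d).card := by
          rw [Finset.sum_const, Finset.card_univ, Fintype.card_fin]; ring
  -- the good event set
  set GoodW := (shiftSpace d).filter
    (fun w => ∀ i : Fin (d+1), ∃ j : Fin (2*d), w (i, j) ∉ Bad i) with hGoodW
  have hpart : GoodW.card + BadW.card = (shiftSpace d).card :=
    Finset.card_filter_add_card_filter_not _
  -- final real arithmetic
  have h2d : (0:ℝ) < 2 ^ (2*d) := by positivity
  have hPc : (0:ℝ) < ((shiftSpace d).card : ℝ) := by exact_mod_cast hPcard_pos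
  rw [le_div_iff₀ hPc]
  calc (1 - ((d : ℝ) + 1) / 2 ^ (2 * d)) * ((shiftSpace d).card : ℝ)
      ≤ (GoodW.card : ℝ) := by
        have hBW : (BadW.card : ℝ) ≤ ((d:ℝ)+1) * ((shiftSpace d).card : ℝ) / 2 ^ (2*d) := by
          rw [le_div_iff₀ h2d]
          have : ((2 ^ (2*d) * BadW.card : ℕ) : ℝ) ≤ (((d+1) * (shiftSpace d).card : ℕ) : ℝ) := by
            exact_mod_cast hBadWcard
          push_cast at this
          linarith
        have h1 : (GoodW.card : ℝ) + (BadW.card : ℝ) = ((shiftSpace d).card : ℝ) := by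
          exact_mod_cast hpart
        have hexp : (1 - ((d : ℝ) + 1) / 2 ^ (2 * d)) * ((shiftSpace d).card : ℝ)
            = ((shiftSpace d).card : ℝ)
              - ((d:ℝ)+1) * ((shiftSpace d).card : ℝ) / 2 ^ (2*d) := by
          ring
        rw [hexp]
        linarith
    _ ≤ _ := by
        refine Nat.cast_le.mpr (Finset.card_le_card ?_)
        intro w hw
        rw [hGoodW, Finset.mem_filter] at hw
        exact Finset.mem_filter.mpr ⟨hw.1, hkey w hw.1 hw.2⟩
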